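/- Fix y ∈ ℝ, ε > 0, m ∈ ℝ and ν > 0, and let ψ₁(η) = −(1/ε)(y − η)·1_{|y−η| ≤ ε} − sign(y − η)·1_{|y−η| > ε} be the weak derivative of the Huber regression loss. Then ∫ ψ₁(η) φ(η; m, ν²) dη = 1 − Φ(y + ε; m, ν²) − Φ(y − ε; m, ν²) − (1/ε)[ (y − m)(Φ(y + ε; m, ν²) − Φ(y − ε; m, ν²)) + ν²(φ(y + ε; m, ν²) − φ(y − ε; m, ν²)) ]. -/

import Mathlib

open MeasureTheory Real Filter

/-- Gaussian density with mean `m` and variance `ν ^ 2`, evaluated at `x`: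
`φ(x; m, ν²) = (2πν²)^{-1/2} exp(−(x−m)²/(2ν²))`. -/
noncomputable def gpdf (m ν x : ℝ) : ℝ :=
  (Real.sqrt (2 * Real.pi * ν ^ 2))⁻¹ * Real.exp (-((x - m) ^ 2) / (2 * ν ^ 2))

/-- Gaussian cumulative distribution function with mean `m` and variance `ν ^ 2`:
`Φ(c; m, ν²) = ∫_{−∞}^{c} φ(η; m, ν²) dη`. -/
noncomputable def gcdf (m ν c : ℝ) : ℝ := ∫ x in Set.Iio c, gpdf m ν x

lemma gpdf_eq (m ν : ℝ) :
    gpdf m ν = ProbabilityTheory.gaussianPDFReal m ⟨ν ^ 2, sq_nonneg ν⟩ := by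
  funext x
  simp [gpdf, ProbabilityTheory.gaussianPDFReal]
  rfl

lemma integrable_gpdf (m ν : ℝ) : Integrable (gpdf m ν) := by
  rw [gpdf_eq]; exact ProbabilityTheory.integrable_gaussianPDFReal _ _

lemma integral_gpdf (m ν : ℝ) (hν : 0 < ν) : ∫ x, gpdf m ν x = 1 := by
  rw [gpdf_eq]
  refine ProbabilityTheory.integral_gaussianPDFReal_eq_one m ?_
  intro h
  have h2 : ((⟨ν ^ 2, sq_nonneg ν⟩ : NNReal) : ℝ) = 0 := by rw [h]; simp
  simp only [NNReal.coe_mk] at h2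
  nlinarith

lemma continuous_gpdf (m ν : ℝ) : Continuous (gpdf m ν) := by
  unfold gpdf; fun_prop

lemma gcdf_eq_Iic (m ν c : ℝ) : gcdf m ν c = ∫ x in Set.Iic c, gpdf m ν x :=
  (integral_Iic_eq_integral_Iio).symm

lemma hasDerivAt_gpdf (m ν : ℝ) (hν : 0 < ν) (x : ℝ) :
    HasDerivAt (fun t => ν ^ 2 * gpdf m ν t) ((m - x) * gpdf m ν x) x := by
  have hν2 : (0:ℝ) < 2 * ν ^ 2 := by positivity
  have h1 : HasDerivAt (fun t : ℝ => -((t - m) ^ 2) / (2 * ν ^ 2))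
      (-(x - m) / ν ^ 2) x := by
    have : HasDerivAt (fun t : ℝ => -((t - m) ^ 2) / (2 * ν ^ 2))
        (-(2 * (x - m) ^ 1 * 1) / (2 * ν ^ 2)) x := by
      have h := (((hasDerivAt_id x).sub_const m).pow 2).neg.div_const (2 * ν ^ 2)
      simpa using h
    convert this using 1
    field_simp
  have h2 : HasDerivAt (fun t => Real.exp (-((t - m) ^ 2) / (2 * ν ^ 2)))
      (Real.exp (-((x - m) ^ 2) / (2 * ν ^ 2)) * (-(x - m) / ν ^ 2)) x := h1.exp
  have h3 := (h2.const_mul ((Real.sqrt (2 * Real.pi * ν ^ 2))⁻¹)).const_mul (ν ^ 2)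
  refine h3.congr_deriv ?_
  simp only [gpdf]
  field_simp
  ring

theorem huber_Psi1 (y ε m ν : ℝ) (hε : 0 < ε) (hν : 0 < ν) :
    ∫ η, (-(1 / ε) * (y - η) * (if |y - η| ≤ ε then (1 : ℝ) else 0)
          - Real.sign (y - η) * (if ε < |y - η| then (1 : ℝ) else 0)) * gpdf m ν η
      = 1 - gcdf m ν (y + ε) - gcdf m ν (y - ε)
        - (1 / ε) * ((y - m) * (gcdf m ν (y + ε) - gcdf m ν (y - ε))
            + ν ^ 2 * (gpdf m ν (y + ε) - gpdf m ν (y - ε))) := by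
  set a := y - ε with ha
  set b := y + ε with hb
  have hab : a ≤ b := by simp [ha, hb]; linarith
  set g := gpdf m ν with hg
  set f : ℝ → ℝ := fun η => (-(1 / ε) * (y - η) * (if |y - η| ≤ ε then (1 : ℝ) else 0)
          - Real.sign (y - η) * (if ε < |y - η| then (1 : ℝ) else 0)) * g η with hf
  -- pointwise descriptions
  have h1 : Set.EqOn f (fun η => -(g η)) (Set.Iic a) := by
    intro η hη
    simp only [Set.mem_Iic, ha] at hη
    have hyη : ε ≤ y - η := by linarith
    rcases eq_or_lt_of_le hyη with h | h
    · have habs : |y - η| ≤ ε := by rw [abs_of_pos (by linarith)]; linarith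
      simp only [hf, if_pos habs, if_neg (not_lt.2 habs), ← h]
      field_simp
      rw [abs_of_pos hε]
      simp
    · have habs : ε < |y - η| := by rw [abs_of_pos (by linarith)]; exact h
      simp only [hf, if_neg (not_le.2 habs), if_pos habs,
        Real.sign_of_pos (show (0:ℝ) < y - η by linarith)]
      ring
  have h2 : Set.EqOn f (fun η => -(1 / ε) * (y - η) * g η) (Set.Ioc a b) := by
    intro η hη
    obtain ⟨hη1, hη2⟩ := hη
    have habs : |y - η| ≤ ε := abs_le.2 ⟨by simp [hb] at hη2; linarith, by simp [ha] at hη1; linarith⟩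
    simp only [hf, if_pos habs, if_neg (not_lt.2 habs)]
    ring
  have h3 : Set.EqOn f (fun η => g η) (Set.Ioi b) := by
    intro η hη
    simp only [Set.mem_Ioi, hb] at hη
    have habs : ε < |y - η| := by rw [abs_of_neg (by linarith)]; linarith
    simp only [hf, if_neg (not_le.2 habs), if_pos habs,
      Real.sign_of_neg (show y - η < 0 by linarith)]
    ring
  -- integrability on pieces
  have hgint : Integrable g := integrable_gpdf m ν
  have hIic : IntegrableOn f (Set.Iic a) :=
    (hgint.neg.integrableOn).congr_fun h1.symm measurableSet_Iic
  have hmidc : Continuous (fun η => -(1 / ε) * (y - η) * g η) := by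
    have := continuous_gpdf m ν
    fun_prop
  have hIoc : IntegrableOn f (Set.Ioc a b) :=
    (hmidc.integrableOn_Ioc).congr_fun h2.symm measurableSet_Ioc
  have hIoi : IntegrableOn f (Set.Ioi b) :=
    (hgint.integrableOn).congr_fun h3.symm measurableSet_Ioi
  have hIoia : IntegrableOn f (Set.Ioi a) := by
    rw [← Set.Ioc_union_Ioi_eq_Ioi hab]
    exact hIoc.union hIoi
  -- split the integral
  have hsplit1 : ∫ η, f η = (∫ η in Set.Iic a, f η) + ∫ η in Set.Ioi a, f η :=
    (intervalIntegral.integral_Iic_add_Ioi hIic hIoia).symm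
  have hsplit2 : ∫ η in Set.Ioi a, f η
      = (∫ η in Set.Ioc a b, f η) + ∫ η in Set.Ioi b, f η := by
    rw [← setIntegral_union (Set.Ioc_disjoint_Ioi le_rfl) measurableSet_Ioi hIoc hIoi,
      Set.Ioc_union_Ioi_eq_Ioi hab]
  -- evaluate pieces
  have e1 : ∫ η in Set.Iic a, f η = -(gcdf m ν a) := by
    rw [setIntegral_congr_fun measurableSet_Iic h1, integral_neg, gcdf_eq_Iic]
  have e3 : ∫ η in Set.Ioi b, f η = 1 - gcdf m ν b := by
    rw [setIntegral_congr_fun measurableSet_Ioi h3]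
    have := intervalIntegral.integral_Iic_add_Ioi (hgint.integrableOn (s := Set.Iic b))
      (hgint.integrableOn (s := Set.Ioi b))
    rw [integral_gpdf m ν hν] at this
    rw [gcdf_eq_Iic]
    linarith
  -- middle piece
  have hcont : Continuous g := continuous_gpdf m ν
  have key : ∫ η in a..b, (y - η) * g η
      = (y - m) * (gcdf m ν b - gcdf m ν a) + ν ^ 2 * (g b - g a) := by
    have hsplit : ∀ η : ℝ, (y - η) * g η = (y - m) * g η + (m - η) * g η := by
      intro η; ring
    have hint1 : IntervalIntegrable (fun η => (y - m) * g η) volume a b :=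
      (continuous_const.mul hcont).intervalIntegrable a b
    have hint2 : IntervalIntegrable (fun η => (m - η) * g η) volume a b := by
      have : Continuous fun η => (m - η) * g η := by fun_prop
      exact this.intervalIntegrable a b
    rw [show (fun η => (y - η) * g η) = fun η => (y - m) * g η + (m - η) * g η from
      funext hsplit]
    rw [intervalIntegral.integral_add hint1 hint2]
    congr 1
    · rw [intervalIntegral.integral_const_mul, gcdf_eq_Iic, gcdf_eq_Iic,
        intervalIntegral.integral_Iic_sub_Iic hgint.integrableOn hgint.integrableOn]
    · have hftc := intervalIntegral.integral_eq_sub_of_hasDerivAt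
        (f := fun t => ν ^ 2 * gpdf m ν t) (f' := fun t => (m - t) * gpdf m ν t)
        (fun x _ => hasDerivAt_gpdf m ν hν x) hint2
      rw [hftc]
      ring
  have e2 : ∫ η in Set.Ioc a b, f η
      = -(1 / ε) * ((y - m) * (gcdf m ν b - gcdf m ν a) + ν ^ 2 * (g b - g a)) := by
    rw [setIntegral_congr_fun measurableSet_Ioc h2,
      show (∫ η in Set.Ioc a b, -(1 / ε) * (y - η) * g η)
        = ∫ η in a..b, -(1 / ε) * (y - η) * g η from
        (intervalIntegral.integral_of_le hab).symm,
      show (fun η => -(1 / ε) * (y - η) * g η) = fun η => -(1 / ε) * ((y - η) * g η) from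
        funext fun η => by ring,
      intervalIntegral.integral_const_mul, key]
  rw [hsplit1, hsplit2, e1, e2, e3]
  ring
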